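/- (Computable sufficient condition for convergence of the weak greedy algorithm.) In the weak greedy setting, define the computable ratios α̃_m = ‖f_{m−1} − w̃_m‖/‖f_{m−1}‖, and suppose in addition that the linear span of S is dense in X and that for each m ≥ 1 there is a best approximation w_m of f_{m−1} in S. If there exists a constant 0 < ε < 1, independent of m, such that α̃_m² ≤ (1 − ε)/((1 + γ_m)² − ε) for all m ≥ 1, then the sequence (u_m)_{m≥1} converges to u. -/

import Mathlib

open scoped RealInnerProductSpace Topology

/-- Best approximation from a cone is orthogonal to the residual. -/
lemma weak_greedy_aux_orth {X : Type*} [NormedAddCommGroup X] [InnerProductSpace ℝ X]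
    (S : Set X) (hScone : ∀ (c : ℝ), ∀ v ∈ S, c • v ∈ S)
    (v ww : X) (hwwS : ww ∈ S) (hbest : ‖v - ww‖ = Metric.infDist v S) :
    ⟪v - ww, ww⟫ = 0 := by
  have key : ∀ t : ℝ, 0 ≤ t ^ 2 * ‖ww‖ ^ 2 - 2 * t * ⟪v - ww, ww⟫ := by
    intro t
    have hmem : (1 + t) • ww ∈ S := hScone (1 + t) ww hwwS
    have h1 : ‖v - ww‖ ≤ ‖v - (1 + t) • ww‖ := by
      rw [hbest]
      simpa [dist_eq_norm] using Metric.infDist_le_dist_of_mem hmem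
    have h2 : ‖v - (1 + t) • ww‖ ^ 2
        = ‖v - ww‖ ^ 2 - 2 * (t * ⟪v - ww, ww⟫) + ‖t • ww‖ ^ 2 := by
      have he : v - (1 + t) • ww = (v - ww) - t • ww := by
        rw [add_smul]; simp; abel
      rw [he, norm_sub_sq_real, real_inner_smul_right]
    have h3 : ‖t • ww‖ ^ 2 = t ^ 2 * ‖ww‖ ^ 2 := by
      rw [norm_smul]; simp [mul_pow, sq_abs]
    nlinarith [norm_nonneg (v - ww), norm_nonneg (v - (1 + t) • ww)]
  by_cases hz : ww = 0
  · simp [hz]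
  · have hB : 0 < ‖ww‖ ^ 2 := by
      have := norm_pos_iff.mpr hz
      positivity
    set c : ℝ := ⟪v - ww, ww⟫ with hc
    have h := key (c / ‖ww‖ ^ 2)
    have heq : (c / ‖ww‖ ^ 2) ^ 2 * ‖ww‖ ^ 2 - 2 * (c / ‖ww‖ ^ 2) * c
        = -(c ^ 2 / ‖ww‖ ^ 2) := by
      field_simp
      ring
    rw [heq] at h
    by_contra hc0
    have h1 : 0 < c ^ 2 := by positivity
    have h2 : 0 < c ^ 2 / ‖ww‖ ^ 2 := div_pos h1 hB
    linarith

/-- Projection bound: inner products with cone elements are controlled by the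
defect `δ` where `‖v‖² - δ² ≤ dist(v,S)²`. -/
lemma weak_greedy_aux_inner {X : Type*} [NormedAddCommGroup X] [InnerProductSpace ℝ X]
    (S : Set X) (hScone : ∀ (c : ℝ), ∀ v ∈ S, c • v ∈ S)
    (v s : X) (hs : s ∈ S) (δ0 : ℝ) (hδ0 : 0 ≤ δ0)
    (hd : ‖v‖ ^ 2 - δ0 ^ 2 ≤ Metric.infDist v S ^ 2) :
    |⟪v, s⟫| ≤ ‖s‖ * δ0 := by
  rcases eq_or_ne s 0 with rfl | hs0
  · simp [hδ0]
  have hns : 0 < ‖s‖ ^ 2 := by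
    have := norm_pos_iff.mpr hs0
    positivity
  set c : ℝ := ⟪v, s⟫ / ‖s‖ ^ 2 with hc
  have hmem : c • s ∈ S := hScone c s hs
  have h1 : Metric.infDist v S ≤ ‖v - c • s‖ := by
    simpa [dist_eq_norm] using Metric.infDist_le_dist_of_mem hmem
  have h2 : ‖v - c • s‖ ^ 2 = ‖v‖ ^ 2 - ⟪v, s⟫ ^ 2 / ‖s‖ ^ 2 := by
    rw [norm_sub_sq_real, real_inner_smul_right, norm_smul, hc]
    rw [mul_pow, Real.norm_eq_abs, sq_abs]
    field_simp
    ring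
  have h3 : Metric.infDist v S ^ 2 ≤ ‖v - c • s‖ ^ 2 :=
    pow_le_pow_left₀ Metric.infDist_nonneg h1 2
  rw [h2] at h3
  have h4 : ⟪v, s⟫ ^ 2 ≤ (‖s‖ * δ0) ^ 2 := by
    rw [mul_pow]
    have h5 : ⟪v, s⟫ ^ 2 / ‖s‖ ^ 2 ≤ δ0 ^ 2 := by linarith
    calc ⟪v, s⟫ ^ 2 = (⟪v, s⟫ ^ 2 / ‖s‖ ^ 2) * ‖s‖ ^ 2 := by field_simp
      _ ≤ δ0 ^ 2 * ‖s‖ ^ 2 := mul_le_mul_of_nonneg_right h5 hns.le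
      _ = ‖s‖ ^ 2 * δ0 ^ 2 := by ring
  calc |⟪v, s⟫| = Real.sqrt (⟪v, s⟫ ^ 2) := (Real.sqrt_sq_eq_abs _).symm
    _ ≤ Real.sqrt ((‖s‖ * δ0) ^ 2) := Real.sqrt_le_sqrt h4
    _ = ‖s‖ * δ0 := Real.sqrt_sq (by positivity)
set_option maxHeartbeats 1000000 in
/-- Computable sufficient condition for convergence of the weak greedy algorithm: if the
span of `S` is dense, best approximations in `S` exist, and the computable ratios
`α̃_m = ‖f_{m-1} - w̃_m‖/‖f_{m-1}‖` satisfy `α̃_m² ≤ (1 - ε)/((1 + γ_m)² - ε)` for some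
fixed `0 < ε < 1`, then `u_m → u`. -/
theorem weak_greedy_computable_condition {X : Type*}
    [NormedAddCommGroup X] [InnerProductSpace ℝ X] [CompleteSpace X]
    (S : Set X) (hS : S.Nonempty) (hScone : ∀ (c : ℝ), ∀ v ∈ S, c • v ∈ S)
    (hdense : Dense (Submodule.span ℝ S : Set X))
    (u : X) (wt : ℕ → X) (hwtS : ∀ m : ℕ, wt (m + 1) ∈ S)
    (ut : ℕ → X) (hut0 : ut 0 = 0) (hutrec : ∀ m : ℕ, ut (m + 1) = ut m + wt (m + 1))
    (f : ℕ → X) (hf : ∀ m : ℕ, f m = u - ut m)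
    (γ : ℕ → ℝ) (hγ : ∀ m : ℕ, 0 ≤ γ (m + 1))
    (hquasi : ∀ m : ℕ, ‖f m - wt (m + 1)‖ ≤ (1 + γ (m + 1)) * Metric.infDist (f m) S)
    (hfpos : ∀ m : ℕ, 0 < ‖f m‖)
    (αt : ℕ → ℝ) (hαt : ∀ m : ℕ, αt (m + 1) = ‖f m - wt (m + 1)‖ / ‖f m‖)
    (w : ℕ → X)
    (hw : ∀ m : ℕ, w (m + 1) ∈ S ∧ ‖f m - w (m + 1)‖ = Metric.infDist (f m) S)
    (ε : ℝ) (hε0 : 0 < ε) (hε1 : ε < 1)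
    (hcond : ∀ m : ℕ, αt (m + 1) ^ 2 ≤ (1 - ε) / ((1 + γ (m + 1)) ^ 2 - ε)) :
    Filter.Tendsto ut Filter.atTop (𝓝 u) := by
  have hfrec : ∀ m, f (m + 1) = f m - wt (m + 1) := by
    intro m; rw [hf, hf, hutrec]; abel
  have hdnn : ∀ m, 0 ≤ Metric.infDist (f m) S := fun m => Metric.infDist_nonneg
  -- orthogonality of the best approximation in the cone
  have hinnerw : ∀ m, ⟪f m, w (m + 1)⟫ = ‖w (m + 1)‖ ^ 2 := by
    intro m
    have h := weak_greedy_aux_orth S hScone (f m) (w (m + 1)) (hw m).1 (hw m).2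
    rw [inner_sub_left, real_inner_self_eq_norm_sq] at h
    linarith
  have hdsq : ∀ m, Metric.infDist (f m) S ^ 2 = ‖f m‖ ^ 2 - ‖w (m + 1)‖ ^ 2 := by
    intro m
    rw [← (hw m).2, norm_sub_sq_real, hinnerw m]
    ring
  -- inner-product bound against cone elements
  have hinner : ∀ m, ∀ s ∈ S, |⟪f m, s⟫| ≤ ‖s‖ * ‖w (m + 1)‖ := by
    intro m s hs
    exact weak_greedy_aux_inner S hScone (f m) s hs (‖w (m + 1)‖) (norm_nonneg _)
      (le_of_eq (by rw [hdsq m]))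
  -- the energy decay inequality
  have hCsq : ∀ m, ‖f (m + 1)‖ ^ 2 + ε * ‖w (m + 1)‖ ^ 2 ≤ ‖f m‖ ^ 2 := by
    intro m
    have hγm := hγ m
    have hG1 : 1 ≤ 1 + γ (m + 1) := by linarith
    have hG2 : 1 ≤ (1 + γ (m + 1)) ^ 2 := by nlinarith
    have hG2pos : 0 < (1 + γ (m + 1)) ^ 2 := by positivity
    have hden : 0 < (1 + γ (m + 1)) ^ 2 - ε := by linarith
    have hcc : αt (m + 1) ^ 2 * ((1 + γ (m + 1)) ^ 2 - ε) ≤ 1 - ε := by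
      have h := hcond m
      rw [le_div_iff₀ hden] at h
      exact h
    have ha1 : ‖f (m + 1)‖ = αt (m + 1) * ‖f m‖ := by
      rw [hαt m, hfrec m]
      field_simp [(hfpos m).ne']
    have hq : ‖f (m + 1)‖ ≤ (1 + γ (m + 1)) * Metric.infDist (f m) S := by
      rw [hfrec m]; exact hquasi m
    have hq2 : ‖f (m + 1)‖ ^ 2 ≤ (1 + γ (m + 1)) ^ 2 * Metric.infDist (f m) S ^ 2 := by
      have := mul_self_le_mul_self (norm_nonneg (f (m + 1))) hq
      nlinarith [this]
    have hA2 : (0 : ℝ) ≤ ‖f m‖ ^ 2 := sq_nonneg _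
    have e1 : αt (m + 1) ^ 2 * ((1 + γ (m + 1)) ^ 2 - ε) * ‖f m‖ ^ 2
        ≤ (1 - ε) * ‖f m‖ ^ 2 := mul_le_mul_of_nonneg_right hcc hA2
    have e2 : ε * (‖f (m + 1)‖ ^ 2) ≤ ε * ((1 + γ (m + 1)) ^ 2 * Metric.infDist (f m) S ^ 2) :=
      mul_le_mul_of_nonneg_left hq2 hε0.le
    have e3 : (1 - ε) * ‖f m‖ ^ 2 ≤ (1 - ε) * ‖f m‖ ^ 2 * (1 + γ (m + 1)) ^ 2 :=
      le_mul_of_one_le_right (by nlinarith) hG2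
    have hδeq : ‖w (m + 1)‖ ^ 2 = ‖f m‖ ^ 2 - Metric.infDist (f m) S ^ 2 := by
      have := hdsq m; linarith
    have ha2 : ‖f (m + 1)‖ ^ 2 = αt (m + 1) ^ 2 * ‖f m‖ ^ 2 := by
      rw [ha1]; ring
    have key : (‖f (m + 1)‖ ^ 2 + ε * ‖w (m + 1)‖ ^ 2) * (1 + γ (m + 1)) ^ 2
        ≤ ‖f m‖ ^ 2 * (1 + γ (m + 1)) ^ 2 := by
      rw [hδeq, ha2]
      rw [ha2] at e2
      nlinarith [e1, e2, e3]
    exact le_of_mul_le_mul_right key hG2pos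
  have hmono : ∀ m, ‖f (m + 1)‖ ≤ ‖f m‖ := by
    intro m
    have h1 : ‖f (m + 1)‖ ^ 2 ≤ ‖f m‖ ^ 2 := by
      nlinarith [hCsq m, mul_nonneg hε0.le (sq_nonneg ‖w (m + 1)‖)]
    exact (pow_le_pow_iff_left₀ (norm_nonneg _) (norm_nonneg _) two_ne_zero).1 h1
  have hanti : Antitone (fun m => ‖f m‖) := antitone_nat_of_succ_le hmono
  -- summability of the best-approximation norms
  have htel : ∀ N, ε * ∑ k ∈ Finset.range N, ‖w (k + 1)‖ ^ 2 ≤ ‖f 0‖ ^ 2 - ‖f N‖ ^ 2 := by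
    intro N
    induction N with
    | zero => simp
    | succ N ih =>
        rw [Finset.sum_range_succ]
        have := hCsq N
        nlinarith
  have hsummable : Summable (fun m => ‖w (m + 1)‖ ^ 2) := by
    apply summable_of_sum_range_le (fun n => sq_nonneg _) (c := ‖f 0‖ ^ 2 / ε)
    intro N
    rw [le_div_iff₀ hε0]
    have := htel N
    nlinarith [sq_nonneg ‖f N‖]
  set C : ℝ := ∑' m, ‖w (m + 1)‖ ^ 2 with hC
  have hCnn : 0 ≤ C := tsum_nonneg (fun m => sq_nonneg _)
  have hpartial : ∀ (s : Finset ℕ), ∑ k ∈ s, ‖w (k + 1)‖ ^ 2 ≤ C :=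
    fun s => Summable.sum_le_tsum s (fun k _ => sq_nonneg _) hsummable
  -- the greedy increments are controlled by the best approximations
  have hwtle : ∀ m, ‖wt (m + 1)‖ ≤ 2 * ‖w (m + 1)‖ := by
    intro m
    have hx : ‖f (m + 1)‖ ^ 2 = ‖f m‖ ^ 2 - 2 * ⟪f m, wt (m + 1)⟫ + ‖wt (m + 1)‖ ^ 2 := by
      rw [hfrec m, norm_sub_sq_real]
    have h1 : ‖f (m + 1)‖ ^ 2 ≤ ‖f m‖ ^ 2 := by
      nlinarith [hCsq m, mul_nonneg hε0.le (sq_nonneg ‖w (m + 1)‖)]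
    have h2 : ⟪f m, wt (m + 1)⟫ ≤ ‖wt (m + 1)‖ * ‖w (m + 1)‖ :=
      (le_abs_self _).trans (hinner m _ (hwtS m))
    have h3 : ‖wt (m + 1)‖ ^ 2 ≤ 2 * (‖wt (m + 1)‖ * ‖w (m + 1)‖) := by nlinarith
    rcases eq_or_lt_of_le (norm_nonneg (wt (m + 1))) with h | h
    · rw [← h]; positivity
    · nlinarith
  -- telescoping
  have hdiff : ∀ n m, n ≤ m → f n - f m = ∑ k ∈ Finset.Ico n m, wt (k + 1) := by
    intro n m hnm
    induction m, hnm using Nat.le_induction with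
    | base => simp
    | succ m hnm ih =>
        rw [Finset.sum_Ico_succ_top hnm, ← ih, hfrec m]
        abel
  -- the key distance estimate
  have hFest : ∀ n m, n ≤ m → ‖f n - f m‖ ^ 2
      ≤ ‖f n‖ ^ 2 - ‖f m‖ ^ 2 + 4 * ‖w (m + 1)‖ * ∑ k ∈ Finset.Ico n m, ‖w (k + 1)‖ := by
    intro n m hnm
    have h1 : ‖f n - f m‖ ^ 2 = ‖f n‖ ^ 2 - ‖f m‖ ^ 2 - 2 * ⟪f n - f m, f m⟫ := by
      have e := norm_sub_sq_real (f n) (f m)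
      have e2 : ⟪f n, f m⟫ = ⟪f n - f m, f m⟫ + ‖f m‖ ^ 2 := by
        rw [inner_sub_left, real_inner_self_eq_norm_sq]; ring
      rw [e, e2]; ring
    have h2 : ⟪f n - f m, f m⟫ = ∑ k ∈ Finset.Ico n m, ⟪wt (k + 1), f m⟫ := by
      rw [hdiff n m hnm, sum_inner]
    have h3 : -(2 * ‖w (m + 1)‖ * ∑ k ∈ Finset.Ico n m, ‖w (k + 1)‖) ≤ ⟪f n - f m, f m⟫ := by
      rw [h2]
      have hterm : ∀ k ∈ Finset.Ico n m,
          -(2 * ‖w (m + 1)‖ * ‖w (k + 1)‖) ≤ ⟪wt (k + 1), f m⟫ := by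
        intro k hk
        have hb : |⟪f m, wt (k + 1)⟫| ≤ ‖wt (k + 1)‖ * ‖w (m + 1)‖ := hinner m _ (hwtS k)
        have hb2 : ‖wt (k + 1)‖ ≤ 2 * ‖w (k + 1)‖ := hwtle k
        rw [real_inner_comm]
        have := neg_abs_le ⟪f m, wt (k + 1)⟫
        nlinarith [norm_nonneg (w (m + 1)), norm_nonneg (w (k + 1))]
      calc -(2 * ‖w (m + 1)‖ * ∑ k ∈ Finset.Ico n m, ‖w (k + 1)‖)
          = ∑ k ∈ Finset.Ico n m, -(2 * ‖w (m + 1)‖ * ‖w (k + 1)‖) := by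
            rw [Finset.mul_sum, ← Finset.sum_neg_distrib]
        _ ≤ ∑ k ∈ Finset.Ico n m, ⟪wt (k + 1), f m⟫ := Finset.sum_le_sum hterm
    rw [h1]
    linarith
  -- bound on partial sums by Cauchy–Schwarz
  have hIco : ∀ n m : ℕ, (∑ k ∈ Finset.Ico n m, ‖w (k + 1)‖) ≤ Real.sqrt (m * C) := by
    intro n m
    have h1 : (∑ k ∈ Finset.Ico n m, ‖w (k + 1)‖) ≤ ∑ k ∈ Finset.range m, ‖w (k + 1)‖ := by
      apply Finset.sum_le_sum_of_subset_of_nonneg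
      · intro x hx
        simp only [Finset.mem_Ico] at hx
        simp [hx.2]
      · intro k _ _; exact norm_nonneg _
    have h2 : (∑ k ∈ Finset.range m, ‖w (k + 1)‖) ^ 2 ≤ (m : ℝ) * C := by
      calc (∑ k ∈ Finset.range m, ‖w (k + 1)‖) ^ 2
          ≤ (Finset.range m).card * ∑ k ∈ Finset.range m, ‖w (k + 1)‖ ^ 2 :=
            sq_sum_le_card_mul_sum_sq
        _ ≤ (m : ℝ) * C := by
            rw [Finset.card_range]
            exact mul_le_mul_of_nonneg_left (hpartial _) (Nat.cast_nonneg m)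
    have h3 : (∑ k ∈ Finset.range m, ‖w (k + 1)‖) ≤ Real.sqrt ((m : ℝ) * C) :=
      (Real.le_sqrt (Finset.sum_nonneg fun k _ => norm_nonneg _)
        (mul_nonneg (Nat.cast_nonneg m) hCnn)).2 h2
    exact h1.trans h3
  -- the defects tend to zero
  have hδ0 : Filter.Tendsto (fun m => ‖w (m + 1)‖) Filter.atTop (𝓝 0) := by
    have h1 : Filter.Tendsto (fun m => ‖w (m + 1)‖ ^ 2) Filter.atTop (𝓝 0) :=
      hsummable.tendsto_atTop_zero
    have h2 : Filter.Tendsto (fun m => Real.sqrt (‖w (m + 1)‖ ^ 2))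
        Filter.atTop (𝓝 (Real.sqrt 0)) := (Real.continuous_sqrt.tendsto 0).comp h1
    rw [Real.sqrt_zero] at h2
    exact h2.congr (fun m => Real.sqrt_sq (norm_nonneg _))
  -- extraction of a good subsequence
  have hfreq : ∀ j : ℕ, ∃ᶠ m : ℕ in Filter.atTop,
      ((m : ℝ) + 1) * ‖w (m + 1)‖ ^ 2 < 1 / (j + 1) := by
    intro j
    by_contra hcon
    rw [Filter.not_frequently] at hcon
    have hO : (fun m : ℕ => 1 / ((m : ℝ) + 1)) =O[Filter.atTop]
        (fun m => ‖w (m + 1)‖ ^ 2) := by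
      apply Asymptotics.IsBigO.of_bound ((j : ℝ) + 1)
      filter_upwards [hcon] with m hm
      push_neg at hm
      have hj1 : (0 : ℝ) < (j : ℝ) + 1 := by positivity
      have hm1 : (0 : ℝ) < (m : ℝ) + 1 := by positivity
      have h1 : 1 / ((j : ℝ) + 1) ≤ ((m : ℝ) + 1) * ‖w (m + 1)‖ ^ 2 := hm
      rw [Real.norm_eq_abs, Real.norm_eq_abs, abs_of_nonneg (by positivity),
        abs_of_nonneg (sq_nonneg _), div_le_iff₀ hm1]
      calc (1 : ℝ) = (1 / ((j : ℝ) + 1)) * ((j : ℝ) + 1) := by field_simp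
        _ ≤ (((m : ℝ) + 1) * ‖w (m + 1)‖ ^ 2) * ((j : ℝ) + 1) :=
            mul_le_mul_of_nonneg_right h1 hj1.le
        _ = ((j : ℝ) + 1) * ‖w (m + 1)‖ ^ 2 * ((m : ℝ) + 1) := by ring
    have hsum3 : Summable (fun m : ℕ => 1 / ((m : ℝ) + 1)) :=
      summable_of_isBigO_nat hsummable hO
    have hsum4 : Summable (fun m : ℕ => 1 / (m : ℝ)) := by
      rw [← summable_nat_add_iff 1]
      exact hsum3.congr (fun m => by push_cast; ring)
    exact Real.not_summable_one_div_natCast hsum4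
  obtain ⟨φ, hφmono, hφ⟩ := Filter.extraction_forall_of_frequently hfreq
  -- the correction term along the subsequence tends to 0
  have hB0 : Filter.Tendsto (fun j => ‖w (φ j + 1)‖ * Real.sqrt ((φ j : ℝ) * C))
      Filter.atTop (𝓝 0) := by
    refine squeeze_zero_norm (f := fun j => ‖w (φ j + 1)‖ * Real.sqrt ((φ j : ℝ) * C))
        (a := fun j => Real.sqrt (C / (j + 1))) (fun j => ?_) ?_
    · show ‖‖w (φ j + 1)‖ * Real.sqrt ((φ j : ℝ) * C)‖ ≤ Real.sqrt (C / (j + 1))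
      rw [Real.norm_eq_abs, abs_of_nonneg (by positivity)]
      have h1 : ‖w (φ j + 1)‖ * Real.sqrt ((φ j : ℝ) * C)
          = Real.sqrt (‖w (φ j + 1)‖ ^ 2 * ((φ j : ℝ) * C)) := by
        rw [Real.sqrt_mul (sq_nonneg _), Real.sqrt_sq (norm_nonneg _)]
      rw [h1]
      apply Real.sqrt_le_sqrt
      have h2 : ((φ j : ℝ) + 1) * ‖w (φ j + 1)‖ ^ 2 < 1 / (j + 1) := hφ j
      have h3 : (φ j : ℝ) * ‖w (φ j + 1)‖ ^ 2 ≤ 1 / (j + 1) := by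
        nlinarith [sq_nonneg ‖w (φ j + 1)‖]
      calc ‖w (φ j + 1)‖ ^ 2 * ((φ j : ℝ) * C)
          = ((φ j : ℝ) * ‖w (φ j + 1)‖ ^ 2) * C := by ring
        _ ≤ (1 / (j + 1)) * C := mul_le_mul_of_nonneg_right h3 hCnn
        _ = C / (j + 1) := by ring
    · have h1 : Filter.Tendsto (fun j : ℕ => C / ((j : ℝ) + 1)) Filter.atTop (𝓝 0) := by
        have h2 := (tendsto_const_div_atTop_nhds_zero_nat C).comp
          (Filter.tendsto_add_atTop_nat 1)
        exact h2.congr (fun j => by simp only [Function.comp_apply]; push_cast; ring)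
      have h3 := (Real.continuous_sqrt.tendsto 0).comp h1
      simpa [Function.comp_def] using h3
  -- the squared norms converge (antitone, bounded below)
  have hbdd : BddBelow (Set.range fun m => ‖f m‖ ^ 2) := by
    refine ⟨0, ?_⟩
    rintro x ⟨m, rfl⟩
    positivity
  have hA2anti : Antitone (fun m => ‖f m‖ ^ 2) := fun i j hij =>
    pow_le_pow_left₀ (norm_nonneg _) (hanti hij) 2
  have hA2conv : Filter.Tendsto (fun m => ‖f m‖ ^ 2) Filter.atTop (𝓝 (⨅ m, ‖f m‖ ^ 2)) :=
    tendsto_atTop_ciInf hA2anti hbdd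
  have hA2cauchy : CauchySeq (fun j => ‖f (φ j)‖ ^ 2) :=
    (hA2conv.comp hφmono.tendsto_atTop).cauchySeq
  -- f ∘ φ is Cauchy
  have hcauchy : CauchySeq (fun j => f (φ j)) := by
    rw [Metric.cauchySeq_iff]
    intro η hη
    obtain ⟨N₁, hN₁⟩ := Metric.cauchySeq_iff.1 hA2cauchy (η ^ 2 / 2) (by positivity)
    obtain ⟨N₂, hN₂⟩ := (Metric.tendsto_atTop.1 hB0) (η ^ 2 / 8) (by positivity)
    refine ⟨max N₁ N₂, ?_⟩
    have key : ∀ i j, N₁ ≤ i → N₂ ≤ j → i ≤ j → dist (f (φ i)) (f (φ j)) < η := by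
      intro i j hi hj hij
      have hφij : φ i ≤ φ j := hφmono.monotone hij
      have h1 := hFest (φ i) (φ j) hφij
      have h2 : ‖f (φ i)‖ ^ 2 - ‖f (φ j)‖ ^ 2 < η ^ 2 / 2 := by
        have := hN₁ i hi j (le_trans hi hij)
        rw [Real.dist_eq] at this
        exact lt_of_le_of_lt (le_abs_self _) this
      have h3 : 4 * ‖w (φ j + 1)‖ * ∑ k ∈ Finset.Ico (φ i) (φ j), ‖w (k + 1)‖
          ≤ 4 * (‖w (φ j + 1)‖ * Real.sqrt ((φ j : ℝ) * C)) := by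
        have hs := hIco (φ i) (φ j)
        nlinarith [norm_nonneg (w (φ j + 1)),
          Finset.sum_nonneg (fun k (_ : k ∈ Finset.Ico (φ i) (φ j)) => norm_nonneg (w (k + 1)))]
      have h4 : ‖w (φ j + 1)‖ * Real.sqrt ((φ j : ℝ) * C) < η ^ 2 / 8 := by
        have := hN₂ j hj
        rw [Real.dist_eq, sub_zero] at this
        exact lt_of_le_of_lt (le_abs_self _) this
      have h5 : ‖f (φ i) - f (φ j)‖ ^ 2 < η ^ 2 := by linarith
      rw [dist_eq_norm]
      nlinarith [norm_nonneg (f (φ i) - f (φ j))]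
    intro i hi j hj
    rcases le_total i j with hij | hji
    · exact key i j (le_trans (le_max_left _ _) hi) (le_trans (le_max_right _ _) hj) hij
    · rw [dist_comm]
      exact key j i (le_trans (le_max_left _ _) hj) (le_trans (le_max_right _ _) hi) hji
  obtain ⟨g, hg⟩ := cauchySeq_tendsto_of_complete hcauchy
  -- the limit is orthogonal to S, hence zero by density
  have hδφ0 : Filter.Tendsto (fun j => ‖w (φ j + 1)‖) Filter.atTop (𝓝 0) :=
    hδ0.comp hφmono.tendsto_atTop
  have hgS : ∀ s ∈ S, ⟪g, s⟫ = 0 := by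
    intro s hs
    have h1 : Filter.Tendsto (fun j => ⟪f (φ j), s⟫) Filter.atTop (𝓝 ⟪g, s⟫) :=
      hg.inner tendsto_const_nhds
    have h2 : Filter.Tendsto (fun j => ⟪f (φ j), s⟫) Filter.atTop (𝓝 0) := by
      refine squeeze_zero_norm (a := fun j => ‖s‖ * ‖w (φ j + 1)‖) (fun j => ?_) ?_
      · rw [Real.norm_eq_abs]
        exact hinner (φ j) s hs
      · have := hδφ0.const_mul ‖s‖
        simpa using this
    exact tendsto_nhds_unique h1 h2
  have hgzero : g = 0 := by
    apply hdense.eq_zero_of_inner_left (𝕜 := ℝ)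
    rintro v hv
    refine Submodule.span_induction (p := fun x _ => ⟪g, x⟫ = 0)
      (fun x hx => hgS x hx) (by simp)
      (fun x y _ _ hx hy => by simp only [inner_add_right, hx, hy, add_zero])
      (fun c x _ hx => by simp only [real_inner_smul_right, hx, mul_zero]) hv
  -- conclude
  have haφ : Filter.Tendsto (fun j => ‖f (φ j)‖) Filter.atTop (𝓝 0) := by
    have := hg.norm
    rw [hgzero, norm_zero] at this
    exact this
  have hbdd2 : BddBelow (Set.range fun m => ‖f m‖) := by
    refine ⟨0, ?_⟩
    rintro x ⟨m, rfl⟩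
    positivity
  have haconv : Filter.Tendsto (fun m => ‖f m‖) Filter.atTop (𝓝 (⨅ m, ‖f m‖)) :=
    tendsto_atTop_ciInf hanti hbdd2
  have hinf0 : (⨅ m, ‖f m‖) = 0 :=
    tendsto_nhds_unique (haconv.comp hφmono.tendsto_atTop) haφ
  rw [hinf0] at haconv
  rw [tendsto_iff_norm_sub_tendsto_zero]
  exact haconv.congr (fun m => by rw [hf, norm_sub_rev])
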